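/- Let A ∈ B(E,F) have generalized inverse A⁺, and let W = { T ∈ B(E,F) : ‖T − A‖ < ‖A⁺‖⁻¹ }. Define D(X) = (X − A) P_{R(A⁺)} + C_A(A⁺,X)⁻¹ X for X ∈ W, where P_{R(A⁺)} is the projection of E onto R(A⁺) along N(A) and C_A(A⁺,X) = I_F + (X−A)A⁺. Then (D(X) − A) A⁺ = (X − A) A⁺ for all X ∈ W. -/

import Mathlib

open ContinuousLinearMap

variable {E F : Type*} [NormedAddCommGroup E] [NormedSpace ℝ E] [CompleteSpace E]
  [NormedAddCommGroup F] [NormedSpace ℝ F] [CompleteSpace F]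

theorem stmt17 (A : E →L[ℝ] F) (Ap : F →L[ℝ] E)
    (h1 : A ∘L (Ap ∘L A) = A) (h2 : Ap ∘L (A ∘L Ap) = Ap)
    (Pr : E →L[ℝ] E) (hPr : Pr ∘L Pr = Pr)
    (hPrr : LinearMap.range (Pr : E →ₗ[ℝ] E) = LinearMap.range (Ap : F →ₗ[ℝ] E))
    (hPrk : LinearMap.ker (Pr : E →ₗ[ℝ] E) = LinearMap.ker (A : E →ₗ[ℝ] F)) :
    ∀ X : E →L[ℝ] F, ‖X - A‖ < ‖Ap‖⁻¹ →
      (((X - A) ∘L Pr +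
        Ring.inverse (ContinuousLinearMap.id ℝ F + (X - A) ∘L Ap) ∘L X) - A) ∘L Ap =
        (X - A) ∘L Ap := by
  intro X hX
  -- Pr fixes range of Ap
  have hPA : Pr ∘L Ap = Ap := by
    ext f
    have hmem : Ap f ∈ LinearMap.range (Pr : E →ₗ[ℝ] E) := by
      rw [hPrr]; exact ⟨f, rfl⟩
    obtain ⟨y, hy⟩ := hmem
    have hfix : Pr (Pr y) = Pr y := by
      have := DFunLike.congr_fun hPr y
      simpa using this
    simp only [comp_apply, ← hy, ContinuousLinearMap.coe_coe, hfix]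
  -- the central operator is a unit
  have hApne : ‖Ap‖ ≠ 0 := by
    intro h
    rw [h, inv_zero] at hX
    exact absurd hX (not_lt.2 (norm_nonneg _))
  have hnorm : ‖(X - A) ∘L Ap‖ < 1 := by
    calc ‖(X - A) ∘L Ap‖ ≤ ‖X - A‖ * ‖Ap‖ := opNorm_comp_le _ _
      _ < ‖Ap‖⁻¹ * ‖Ap‖ := by
          apply mul_lt_mul_of_pos_right hX
          exact lt_of_le_of_ne (norm_nonneg _) (Ne.symm hApne)
      _ = 1 := inv_mul_cancel₀ hApne
  set C : F →L[ℝ] F := 1 + (X - A) ∘L Ap with hC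
  have hnorm' : ‖-((X - A) ∘L Ap)‖ < 1 := by rwa [norm_neg]
  have hu : IsUnit C := by
    refine ⟨Units.oneSub _ hnorm', ?_⟩
    simp only [Units.oneSub, Units.val_mk, hC]
    abel
  -- C ∘ (A ∘ Ap) = X ∘ Ap
  have h2' : ∀ f, Ap (A (Ap f)) = Ap f := fun f => by
    have := DFunLike.congr_fun h2 f
    simpa using this
  have hkey : C ∘L (A ∘L Ap) = X ∘L Ap := by
    ext f
    simp [hC, h2' f]
  have hinv : Ring.inverse C ∘L (X ∘L Ap) = A ∘L Ap := by
    rw [← hkey, ← comp_assoc, ← mul_def, ← mul_def, Ring.inverse_mul_cancel _ hu,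
      one_mul]
  have hid : ContinuousLinearMap.id ℝ F + (X - A) ∘L Ap = C := by
    rw [hC, one_def]
  rw [hid, sub_comp, add_comp, comp_assoc, hPA, comp_assoc, hinv, sub_comp]
  abel
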